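/- Let X and Y be metric spaces, equip X × Y with the ℓ² product metric, and let x₁, x₂ ∈ X and y₁, y₂ ∈ Y. Suppose there exists an infinite family (γᵢ)_{i ∈ ℕ} of geodesics in X, each joining x₁ to x₂, such that for every t ∈ (0,1) and every b ∈ X the set {i ∈ ℕ : γᵢ(t) = b} is finite, and suppose there exists a geodesic σ in Y joining y₁ to y₂. Then the configuration ((x₁, y₁), (x₂, y₂)) is insecure in X × Y, i.e., no finite set B ⊆ X × Y has the property that every geodesic joining (x₁, y₁) to (x₂, y₂) has an interior point in B. (This abstracts the final Proposition of the paper: any configuration in N × M projecting to one of the constructed secure-but-not-midpoint-secure configurations of the surface N is insecure, for any Riemannian manifold M.) -/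

import Mathlib

/-- A map `γ : ℝ → X` (viewed on `[0,1]`) is a geodesic with speed `L` if `L > 0` and
every `t ∈ [0,1]` has a neighborhood `U ⊆ ℝ` on which `γ` is a local isometry up to
the factor `L`: `dist (γ s) (γ s') = L * |s - s'|` for `s, s' ∈ U ∩ [0,1]`. -/
def IsGeodesicWithSpeed {X : Type*} [MetricSpace X] (γ : ℝ → X) (L : ℝ) : Prop :=
  0 < L ∧ ∀ t ∈ Set.Icc (0:ℝ) 1, ∃ U ∈ nhds t,
    ∀ s ∈ U ∩ Set.Icc (0:ℝ) 1, ∀ s' ∈ U ∩ Set.Icc (0:ℝ) 1,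
      dist (γ s) (γ s') = L * |s - s'|

/-- A geodesic is a map with some positive speed. -/
def IsGeodesic {X : Type*} [MetricSpace X] (γ : ℝ → X) : Prop :=
  ∃ L : ℝ, IsGeodesicWithSpeed γ L

/-- `B` is a blocking set for the configuration `(x, y)`: every geodesic joining `x` to `y`
has an interior point in `B`. -/
def Blocks {X : Type*} [MetricSpace X] (x y : X) (B : Set X) : Prop :=
  ∀ γ : ℝ → X, IsGeodesic γ → γ 0 = x → γ 1 = y → ∃ t ∈ Set.Ioo (0:ℝ) 1, γ t ∈ B

/-- The configuration `(x, y)` is secure: it has a finite blocking set. -/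
def Secure {X : Type*} [MetricSpace X] (x y : X) : Prop :=
  ∃ B : Set X, B.Finite ∧ Blocks x y B

/-- `B` is a midpoint blocking set for `(x, y)`: every geodesic joining `x` to `y`
has its midpoint in `B`. -/
def MidpointBlocks {X : Type*} [MetricSpace X] (x y : X) (B : Set X) : Prop :=
  ∀ γ : ℝ → X, IsGeodesic γ → γ 0 = x → γ 1 = y → γ (1/2 : ℝ) ∈ B

/-- The configuration `(x, y)` is midpoint secure: it has a finite midpoint blocking set. -/
def MidpointSecure {X : Type*} [MetricSpace X] (x y : X) : Prop :=
  ∃ B : Set X, B.Finite ∧ MidpointBlocks x y B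

open scoped ENNReal

private lemma l2dist_eq {X Y : Type*} [MetricSpace X] [MetricSpace Y] (a a' : X) (b b' : Y) :
    dist ((WithLp.equiv 2 (X × Y)).symm (a, b)) ((WithLp.equiv 2 (X × Y)).symm (a', b'))
      = Real.sqrt (dist a a' ^ 2 + dist b b' ^ 2) := by
  rw [WithLp.prod_dist_eq_add (by norm_num : 0 < (2:ℝ≥0∞).toReal)]
  have h1 : ((2:ℝ≥0∞).toReal) = (2:ℝ) := by norm_num
  rw [h1, Real.sqrt_eq_rpow]
  norm_num [Real.rpow_natCast]

private lemma prod_geodesic {X Y : Type*} [MetricSpace X] [MetricSpace Y]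
    {γ : ℝ → X} {σ : ℝ → Y} (hγ : IsGeodesic γ) (hσ : IsGeodesic σ) :
    IsGeodesic (fun t => (WithLp.equiv 2 (X × Y)).symm (γ t, σ t)) := by
  obtain ⟨L, hL, hγloc⟩ := hγ
  obtain ⟨M, hM, hσloc⟩ := hσ
  refine ⟨Real.sqrt (L ^ 2 + M ^ 2), Real.sqrt_pos.mpr (by positivity), ?_⟩
  intro t ht
  obtain ⟨U, hU, hUd⟩ := hγloc t ht
  obtain ⟨V, hV, hVd⟩ := hσloc t ht
  refine ⟨U ∩ V, Filter.inter_mem hU hV, ?_⟩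
  rintro s ⟨⟨hsU, hsV⟩, hsI⟩ s' ⟨⟨hs'U, hs'V⟩, hs'I⟩
  rw [l2dist_eq, hUd s ⟨hsU, hsI⟩ s' ⟨hs'U, hs'I⟩, hVd s ⟨hsV, hsI⟩ s' ⟨hs'V, hs'I⟩]
  rw [show (L * |s - s'|) ^ 2 + (M * |s - s'|) ^ 2 = (L ^ 2 + M ^ 2) * |s - s'| ^ 2 by ring,
    Real.sqrt_mul (by positivity), Real.sqrt_sq_eq_abs, abs_abs]

private lemma geodesic_preimage_finite {Y : Type*} [MetricSpace Y] {σ : ℝ → Y}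
    (hσ : IsGeodesic σ) (b : Y) : {t ∈ Set.Icc (0:ℝ) 1 | σ t = b}.Finite := by
  obtain ⟨L, hL, hloc⟩ := hσ
  choose U hU hprop using hloc
  obtain ⟨T, hT⟩ := isCompact_Icc.elim_nhds_subcover' U hU
  have hsub : {t ∈ Set.Icc (0:ℝ) 1 | σ t = b} ⊆
      ⋃ x ∈ T, (U x x.2 ∩ Set.Icc (0:ℝ) 1 ∩ {t | σ t = b}) := by
    rintro s ⟨hs1, hs2⟩
    have := hT hs1
    simp only [Set.mem_iUnion] at this ⊢
    obtain ⟨x, hx, hxs⟩ := this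
    exact ⟨x, hx, ⟨hxs, hs1⟩, hs2⟩
  refine Set.Finite.subset (Set.Finite.biUnion T.finite_toSet fun x hx => ?_) hsub
  refine Set.Subsingleton.finite ?_
  rintro s ⟨⟨hsU, hsI⟩, hsb⟩ s' ⟨⟨hs'U, hs'I⟩, hs'b⟩
  have hd := hprop x x.2 s ⟨hsU, hsI⟩ s' ⟨hs'U, hs'I⟩
  rw [hsb, hs'b, dist_self] at hd
  have h0 : |s - s'| = 0 := by
    rcases mul_eq_zero.mp hd.symm with h | h
    · exact absurd h hL.ne'
    · exact h
  have := abs_eq_zero.mp h0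
  linarith [sub_eq_zero.mp this]

/-- If `X` contains infinitely many geodesics joining `x₁` to `x₂` such that at each
interior time `t` only finitely many of them pass through any given point, and `y₁, y₂`
are joined by a geodesic in `Y`, then the configuration `((x₁,y₁),(x₂,y₂))` is insecure
in the ℓ² product. -/
theorem stmt11 {X Y : Type*} [MetricSpace X] [MetricSpace Y]
    (x₁ x₂ : X) (y₁ y₂ : Y) (γ : ℕ → ℝ → X)
    (hγgeo : ∀ i, IsGeodesic (γ i))
    (hγjoin : ∀ i, γ i 0 = x₁ ∧ γ i 1 = x₂)
    (hfin : ∀ t ∈ Set.Ioo (0:ℝ) 1, ∀ b : X, {i : ℕ | γ i t = b}.Finite)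
    (σ : ℝ → Y) (hσ : IsGeodesic σ) (hσ0 : σ 0 = y₁) (hσ1 : σ 1 = y₂) :
    ¬ Secure ((WithLp.equiv 2 (X × Y)).symm (x₁, y₁))
      ((WithLp.equiv 2 (X × Y)).symm (x₂, y₂)) := by
  rintro ⟨B, hBfin, hBblocks⟩
  set c : ℕ → ℝ → WithLp 2 (X × Y) :=
    fun i t => (WithLp.equiv 2 (X × Y)).symm (γ i t, σ t) with hc
  have hblk : ∀ i, ∃ t ∈ Set.Ioo (0:ℝ) 1, c i t ∈ B := by
    intro i
    refine hBblocks (c i) (prod_geodesic (hγgeo i) hσ) ?_ ?_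
    · simp [hc, (hγjoin i).1, hσ0]
    · simp [hc, (hγjoin i).2, hσ1]
  choose t ht htB using hblk
  set K : Set ℝ := ⋃ b ∈ B, {s ∈ Set.Icc (0:ℝ) 1 | σ s = (WithLp.equiv 2 (X × Y) b).2}
    with hK
  have hKfin : K.Finite :=
    Set.Finite.biUnion hBfin fun b _ => geodesic_preimage_finite hσ _
  set F : ℕ → WithLp 2 (X × Y) × ℝ := fun i => (c i (t i), t i) with hF
  have hrange : Set.range F ⊆ B ×ˢ K := by
    rintro _ ⟨i, rfl⟩
    refine ⟨htB i, ?_⟩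
    simp only [hK, Set.mem_iUnion]
    refine ⟨c i (t i), htB i, ⟨Set.mem_Icc_of_Ioo (ht i), ?_⟩⟩
    simp [hc, hF]
  have hfinprod : (B ×ˢ K).Finite := hBfin.prod hKfin
  -- some fiber of F is infinite
  have : ∃ p ∈ B ×ˢ K, (F ⁻¹' {p}).Infinite := by
    by_contra h
    push_neg at h
    have : (Set.univ : Set ℕ) ⊆ ⋃ p ∈ B ×ˢ K, F ⁻¹' {p} := by
      intro i _
      simp only [Set.mem_iUnion]
      exact ⟨F i, hrange ⟨i, rfl⟩, rfl⟩
    exact Set.infinite_univ (Set.Finite.subset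
      (Set.Finite.biUnion hfinprod fun p hp => h p hp) this)
  obtain ⟨⟨b, s⟩, -, hinf⟩ := this
  obtain ⟨i₀, hi₀⟩ := hinf.nonempty
  have hFi₀ : F i₀ = (b, s) := hi₀
  have hs : s ∈ Set.Ioo (0:ℝ) 1 := by
    have : t i₀ = s := congrArg Prod.snd hFi₀
    exact this ▸ ht i₀
  have hsubfib : F ⁻¹' {(b, s)} ⊆ {i : ℕ | γ i s = (WithLp.equiv 2 (X × Y) b).1} := by
    intro i hi
    have hFi : F i = (b, s) := hi
    have h1 : c i (t i) = b := congrArg Prod.fst hFi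
    have h2 : t i = s := congrArg Prod.snd hFi
    have : (γ i (t i), σ (t i)) = WithLp.equiv 2 (X × Y) b := by
      rw [← h1]; simp [hc]
    have := congrArg Prod.fst this
    simp only [Set.mem_setOf_eq, ← h2]
    exact this
  exact (hinf.mono hsubfib) (hfin s hs _)
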